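/- Let Γ be a countable subgroup of PSL(2,ℝ) acting on the upper half-plane ℍ, let M ∈ PSL(2,ℝ), and set G = Γ ∩ M⁻¹ΓM. Then there exists a countable subset E of ℍ such that for every τ₀ ∈ ℍ ∖ E the following holds: for all γ₁, γ₂ ∈ Γ, if M(γ₁τ₀) and M(γ₂τ₀) lie in the same Γ-orbit, then Gγ₁ = Gγ₂. Consequently, for τ₀ ∉ E the map from right cosets G\Γ to Γ-orbits in ℍ sending Gγ to the Γ-orbit of M(γτ₀) is injective. -/

import Mathlib

open scoped MatrixGroups
open UpperHalfPlane Matrix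

/-- Every element of the center of `SL(2, ℝ)` acts trivially on the upper half-plane. -/
theorem center_smul_trivial (A : Matrix.SpecialLinearGroup (Fin 2) ℝ)
    (hA : A ∈ Subgroup.center (Matrix.SpecialLinearGroup (Fin 2) ℝ)) (z : ℍ) : A • z = z := by
  obtain ⟨r, hr, hrA⟩ := Matrix.SpecialLinearGroup.mem_center_iff.mp hA
  have hr0 : (r : ℂ) ≠ 0 := by
    intro h
    rw [show r = (0:ℝ) from by exact_mod_cast h] at hr
    norm_num at hr
  have h00 : (A : Matrix (Fin 2) (Fin 2) ℝ) 0 0 = r := by rw [← hrA]; simp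
  have h01 : (A : Matrix (Fin 2) (Fin 2) ℝ) 0 1 = 0 := by rw [← hrA]; simp
  have h10 : (A : Matrix (Fin 2) (Fin 2) ℝ) 1 0 = 0 := by rw [← hrA]; simp
  have h11 : (A : Matrix (Fin 2) (Fin 2) ℝ) 1 1 = r := by rw [← hrA]; simp
  ext
  rw [UpperHalfPlane.specialLinearGroup_apply]
  simp only [UpperHalfPlane.coe_mk, h00, h01, h10, h11, map_zero, Complex.ofReal_zero,
    zero_mul, add_zero, zero_add, Algebra.algebraMap_self, RingHom.id_apply]
  field_simp

/-- The action of `PSL(2, ℝ) = SL(2, ℝ)/{±I}` on the upper half-plane by Möbius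
transformations, descended from the action of `SL(2, ℝ)`. -/
noncomputable instance PSL.mulActionUpperHalfPlane : MulAction PSL(2, ℝ) ℍ :=
  MulAction.compHom ℍ <|
    QuotientGroup.lift (Subgroup.center _)
      (MulAction.toPermHom (Matrix.SpecialLinearGroup (Fin 2) ℝ) ℍ)
      (fun A hA => Equiv.ext fun z => center_smul_trivial A hA z)

lemma psl_mk_smul (A : Matrix.SpecialLinearGroup (Fin 2) ℝ) (z : ℍ) :
    (QuotientGroup.mk A : PSL(2, ℝ)) • z = A • z := rfl

lemma SL_fixed_eq (A : Matrix.SpecialLinearGroup (Fin 2) ℝ)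
    (hA : A ∉ Subgroup.center (Matrix.SpecialLinearGroup (Fin 2) ℝ))
    {z w : ℍ} (hz : A • z = z) (hw : A • w = w) : z = w := by
  set a : ℝ := (A : Matrix (Fin 2) (Fin 2) ℝ) 0 0 with ha
  set b : ℝ := (A : Matrix (Fin 2) (Fin 2) ℝ) 0 1 with hb
  set c : ℝ := (A : Matrix (Fin 2) (Fin 2) ℝ) 1 0 with hc
  set d : ℝ := (A : Matrix (Fin 2) (Fin 2) ℝ) 1 1 with hd
  have hdet : a * d - b * c = 1 := by
    have := A.property
    rw [Matrix.det_fin_two] at this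
    linarith [this]
  -- denominators are nonzero
  have hden : ∀ u : ℍ, (c : ℂ) * u + d ≠ 0 := by
    intro u h
    have him : c * (u : ℂ).im = 0 := by
      have := congrArg Complex.im h
      simpa using this
    have hc0 : c = 0 := by
      rcases mul_eq_zero.mp him with h' | h'
      · exact h'
      · exact absurd h' (ne_of_gt u.im_pos)
    have hd0 : (d : ℂ) = 0 := by simpa [hc0] using h
    have : d = 0 := by exact_mod_cast hd0
    rw [hc0, this] at hdet
    norm_num at hdet
  have key : ∀ u : ℍ, A • u = u → (c : ℂ) * u ^ 2 + (d - a) * u - b = 0 := by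
    intro u hu
    have h1 : ((A • u : ℍ) : ℂ) = u := congrArg _ hu
    rw [UpperHalfPlane.specialLinearGroup_apply] at h1
    simp only [UpperHalfPlane.coe_mk, Algebra.algebraMap_self, RingHom.id_apply] at h1
    rw [div_eq_iff (hden u)] at h1
    linear_combination -h1
  have Pz := key z hz
  have Pw := key w hw
  by_contra hne
  have hzw : ((z : ℂ) - w) * ((c : ℂ) * (z + w) + (d - a)) = 0 := by
    linear_combination Pz - Pw
  have hzwne : ((z : ℂ) - w) ≠ 0 := by
    intro h
    exact hne (UpperHalfPlane.ext (by linear_combination h))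
  have h2 : (c : ℂ) * ((z : ℂ) + w) + (d - a) = 0 :=
    (mul_eq_zero.mp hzw).resolve_left hzwne
  have hc0 : c = 0 := by
    have him := congrArg Complex.im h2
    simp [Complex.add_im, Complex.mul_im, Complex.sub_im] at him
    rcases him with h' | h'
    · exact h'
    · linarith [z.im_pos, w.im_pos]
  have hda : d = a := by
    rw [hc0] at h2
    push_cast at h2
    simp at h2
    have h3 : (d : ℂ) = a := by linear_combination h2
    exact_mod_cast h3
  have hb0 : b = 0 := by
    rw [hc0, hda] at Pz
    simp at Pz
    exact_mod_cast Pz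
  have ha2 : a ^ 2 = 1 := by
    rw [hda, hc0, hb0] at hdet
    nlinarith [hdet]
  have e01 : (A : Matrix (Fin 2) (Fin 2) ℝ) 0 1 = 0 := by rw [← hb]; exact hb0
  have e10 : (A : Matrix (Fin 2) (Fin 2) ℝ) 1 0 = 0 := by rw [← hc]; exact hc0
  have e11 : (A : Matrix (Fin 2) (Fin 2) ℝ) 1 1 = a := by rw [← hd]; exact hda
  exact hA (Matrix.SpecialLinearGroup.mem_center_iff.mpr ⟨a, by simpa using ha2, by
    ext i j
    fin_cases i <;> fin_cases j <;>
      simp [Matrix.scalar_apply, Matrix.one_apply, e01, e10, e11, ← ha]⟩)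

lemma psl_fixed_eq (g : PSL(2, ℝ)) (hg : g ≠ 1) {z w : ℍ}
    (hz : g • z = z) (hw : g • w = w) : z = w := by
  obtain ⟨A, rfl⟩ := QuotientGroup.mk'_surjective (Subgroup.center _) g
  have hA : A ∉ Subgroup.center (Matrix.SpecialLinearGroup (Fin 2) ℝ) := by
    intro h
    exact hg ((QuotientGroup.eq_one_iff A).mpr h)
  exact SL_fixed_eq A hA (by rw [← psl_mk_smul]; exact hz) (by rw [← psl_mk_smul]; exact hw)

theorem coset_map_injective_off_countable_set
    (Γ : Subgroup PSL(2, ℝ)) (hΓ : (Γ : Set PSL(2, ℝ)).Countable)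
    (M : PSL(2, ℝ))
    (G : Subgroup PSL(2, ℝ)) (hG : G = Γ ⊓ Subgroup.map (MulAut.conj M⁻¹).toMonoidHom Γ) :
    ∃ E : Set ℍ, E.Countable ∧ ∀ τ₀ : ℍ, τ₀ ∉ E →
      ∀ γ₁ γ₂ : PSL(2, ℝ), γ₁ ∈ Γ → γ₂ ∈ Γ →
        M • (γ₁ • τ₀) ∈ MulAction.orbit Γ (M • (γ₂ • τ₀)) → γ₁ * γ₂⁻¹ ∈ G := by
  haveI : Countable Γ := hΓ.to_subtype
  set f : Γ × Γ × Γ → PSL(2, ℝ) :=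
    fun p => (p.1 : PSL(2, ℝ))⁻¹ * M⁻¹ * p.2.1 * M * p.2.2 with hf
  set S : Set PSL(2, ℝ) := Set.range f with hS
  refine ⟨⋃ g ∈ {g ∈ S | g ≠ 1}, {z : ℍ | g • z = z}, ?_, ?_⟩
  · apply Set.Countable.biUnion
    · exact (Set.countable_range f).mono (Set.sep_subset _ _)
    · intro g hg
      exact Set.Subsingleton.countable (fun z hz w hw => psl_fixed_eq g hg.2 hz hw)
  · intro τ₀ hτ γ₁ γ₂ h1 h2 horb
    obtain ⟨δ, hδ⟩ := horb
    set g := γ₁⁻¹ * M⁻¹ * (δ : PSL(2, ℝ)) * M * γ₂ with hgdef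
    have hgS : g ∈ S := ⟨⟨⟨γ₁, h1⟩, δ, ⟨γ₂, h2⟩⟩, rfl⟩
    have hδ' : (δ : PSL(2, ℝ)) • (M • γ₂ • τ₀) = M • γ₁ • τ₀ := hδ
    have hfix : g • τ₀ = τ₀ := by
      simp only [hgdef, mul_smul]
      rw [hδ', inv_smul_smul, inv_smul_smul]
    have hg1 : g = 1 := by
      by_contra h
      exact hτ (Set.mem_biUnion ⟨hgS, h⟩ hfix)
    have hkey : γ₁ * γ₂⁻¹ = M⁻¹ * (δ : PSL(2, ℝ)) * M := by
      have : γ₁ * g * γ₂⁻¹ = M⁻¹ * (δ : PSL(2, ℝ)) * M := by rw [hgdef]; group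
      rw [hg1, mul_one] at this
      exact this
    rw [hG, Subgroup.mem_inf]
    refine ⟨mul_mem h1 (inv_mem h2), ?_⟩
    rw [hkey]
    exact ⟨δ, δ.2, by simp [MulAut.conj_apply, mul_assoc]⟩
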